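/- Let (Ω, 𝒜, P) be a probability space, let (E, ℰ) and (F, ℱ) be measurable spaces, let X : Ω → E be measurable and let Y_i : Ω → F be measurable for each i ∈ ℕ. Assume (i) the sequence (X, Y_i)_{i∈ℕ} is stationary, i.e. the joint law of (X, (Y_{i+1})_{i∈ℕ}) on E × F^ℕ equals the joint law of (X, (Y_i)_{i∈ℕ}) (equivalently, the pushforward of the joint law of (X, (Y_i)_i) under the map (x, y) ↦ (x, y∘succ) equals that joint law); and (ii) the sequence (Y_i)_{i∈ℕ} is ergodic, i.e. the left shift on F^ℕ is a measure-preserving and ergodic transformation for the law of (Y_i)_{i∈ℕ}. Then X and Y_1 are independent: the joint law of (X, Y_1) on E × F is the product of the law of X and the law of Y_1. -/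

import Mathlib

open MeasureTheory

open scoped ENNReal

/-- A finite invariant measure absolutely continuous with respect to an ergodic probability
measure is a scalar multiple of it. -/
lemma aux_ergodic_eq_smul {G : Type*} [MeasurableSpace G] {S : G → G}
    {ν lam : Measure G} [IsProbabilityMeasure ν] [IsFiniteMeasure lam]
    (herg : Ergodic S ν) (hinv : Measure.map S lam = lam) (hac : lam ≪ ν) :
    lam = lam Set.univ • ν := by
  have hS : Measurable S := herg.toMeasurePreserving.measurable
  set g := lam.rnDeriv ν with hgdef
  have hg : Measurable g := Measure.measurable_rnDeriv _ _
  have hwd : ν.withDensity g = lam := Measure.withDensity_rnDeriv_eq _ _ hac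
  -- each level set `{t < g}` is a.e. invariant
  have hlevel : ∀ t : ℝ≥0∞, t ≠ ∞ → S ⁻¹' {y | t < g y} =ᵐ[ν] {y | t < g y} := by
    intro t ht
    set B := {y | t < g y} with hBdef
    have hB : MeasurableSet B := measurableSet_lt measurable_const hg
    have hSB : MeasurableSet (S ⁻¹' B) := hB.preimage hS
    have hlamB : lam (S ⁻¹' B) = lam B := by
      conv_rhs => rw [← hinv, Measure.map_apply hS hB]
    have hνB : ν (S ⁻¹' B) = ν B :=
      herg.toMeasurePreserving.measure_preimage hB.nullMeasurableSet
    -- difference sets have the same measure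
    have hcancel : ∀ μ' : Measure G, μ' (S ⁻¹' B) = μ' B → μ' B ≠ ∞ →
        μ' (S ⁻¹' B \ B) = μ' (B \ S ⁻¹' B) := by
      intro μ' h hfin
      have h1 : μ' (S ⁻¹' B \ B) + μ' (S ⁻¹' B ∩ B) = μ' (S ⁻¹' B) :=
        measure_diff_add_inter _ hB
      have h2 : μ' (B \ S ⁻¹' B) + μ' (B ∩ S ⁻¹' B) = μ' B :=
        measure_diff_add_inter _ hSB
      rw [Set.inter_comm] at h2
      have hfin' : μ' (S ⁻¹' B ∩ B) ≠ ∞ :=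
        fun hcon => hfin (by rw [← h, ← h1, hcon]; simp)
      apply (ENNReal.add_left_inj hfin').mp
      rw [h1, h2, h]
    have hlamD : lam (S ⁻¹' B \ B) = lam (B \ S ⁻¹' B) :=
      hcancel lam hlamB (measure_ne_top _ _)
    have hνD : ν (S ⁻¹' B \ B) = ν (B \ S ⁻¹' B) :=
      hcancel ν hνB (measure_ne_top _ _)
    -- the difference set `B \ S⁻¹ B` is null
    have hD'null : ν (B \ S ⁻¹' B) = 0 := by
      by_contra hpos
      -- find a sub-level set with positive measure
      set M : ℕ → Set G := fun n => {y | t + (n : ℝ≥0∞)⁻¹ ≤ g y} with hMdef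
      have hMmeas : ∀ n, MeasurableSet (M n) := fun n =>
        measurableSet_le measurable_const hg
      have hsub : B \ S ⁻¹' B ⊆ ⋃ n, (B \ S ⁻¹' B) ∩ M n := by
        intro y hy
        have hty : t < g y := hy.1
        have hpos' : (0 : ℝ≥0∞) < g y - t := tsub_pos_iff_lt.mpr hty
        obtain ⟨n, hn⟩ := ENNReal.exists_inv_nat_lt hpos'.ne'
        refine Set.mem_iUnion.2 ⟨n, hy, ?_⟩
        have : t + (n : ℝ≥0∞)⁻¹ ≤ t + (g y - t) := add_le_add_right hn.le t
        rwa [add_tsub_cancel_of_le hty.le] at this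
      obtain ⟨n, hn⟩ : ∃ n, ν ((B \ S ⁻¹' B) ∩ M n) ≠ 0 := by
        by_contra hall
        push_neg at hall
        exact hpos (measure_mono_null hsub (measure_iUnion_null hall))
      set ε : ℝ≥0∞ := (n : ℝ≥0∞)⁻¹ with hεdef
      have hε : ε ≠ 0 := ENNReal.inv_ne_zero.mpr (ENNReal.natCast_ne_top n)
      set D' := B \ S ⁻¹' B with hD'def
      have hD'meas : MeasurableSet D' := hB.diff hSB
      -- lower bound for lam D'
      have hlow : t * ν D' + ε * ν (D' ∩ M n) ≤ lam D' := by
        have hsplit : D' = (D' ∩ M n) ∪ (D' \ M n) := (Set.inter_union_diff _ _).symm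
        have hint : lam D' = (∫⁻ y in D' ∩ M n, g y ∂ν) + ∫⁻ y in D' \ M n, g y ∂ν := by
          rw [← Measure.setLIntegral_rnDeriv hac D']
          conv_lhs => rw [hsplit]
          exact lintegral_union (hD'meas.diff (hMmeas n)) Set.disjoint_sdiff_inter.symm
            |>.trans rfl
        have h1 : (t + ε) * ν (D' ∩ M n) ≤ ∫⁻ y in D' ∩ M n, g y ∂ν := by
          rw [← setLIntegral_const]
          exact setLIntegral_mono hg fun y hy => hy.2
        have h2 : t * ν (D' \ M n) ≤ ∫⁻ y in D' \ M n, g y ∂ν := by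
          rw [← setLIntegral_const]
          exact setLIntegral_mono hg fun y hy => hy.1.1.le
        calc t * ν D' + ε * ν (D' ∩ M n)
            = t * (ν (D' ∩ M n) + ν (D' \ M n)) + ε * ν (D' ∩ M n) := by
              rw [measure_inter_add_diff _ (hMmeas n)]
          _ = (t + ε) * ν (D' ∩ M n) + t * ν (D' \ M n) := by ring
          _ ≤ (∫⁻ y in D' ∩ M n, g y ∂ν) + ∫⁻ y in D' \ M n, g y ∂ν := add_le_add h1 h2
          _ = lam D' := hint.symm
      -- upper bound for lam D
      have hup : lam (S ⁻¹' B \ B) ≤ t * ν (S ⁻¹' B \ B) := by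
        rw [← Measure.setLIntegral_rnDeriv hac, ← setLIntegral_const]
        exact setLIntegral_mono measurable_const fun y hy => not_lt.mp hy.2
      have hfin : t * ν D' ≠ ∞ := ENNReal.mul_ne_top ht (measure_ne_top _ _)
      have : t * ν D' < t * ν D' + ε * ν (D' ∩ M n) :=
        ENNReal.lt_add_right hfin (mul_ne_zero hε hn)
      have hchain : t * ν D' + ε * ν (D' ∩ M n) ≤ t * ν D' := by
        calc t * ν D' + ε * ν (D' ∩ M n) ≤ lam D' := hlow
          _ = lam (S ⁻¹' B \ B) := hlamD.symm
          _ ≤ t * ν (S ⁻¹' B \ B) := hup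
          _ = t * ν D' := by rw [hνD]
      exact absurd hchain this.not_ge
    exact ae_eq_set.mpr ⟨hνD.trans hD'null, hD'null⟩
  -- hence `g ∘ S = g` almost everywhere
  have hgS : g ∘ S =ᵐ[ν] g := by
    have h1 : ∀ᵐ y ∂ν, ∀ q : ℚ,
        (y ∈ S ⁻¹' {z | ((Real.toNNReal q : ℝ≥0∞)) < g z}) =
          (y ∈ {z | ((Real.toNNReal q : ℝ≥0∞)) < g z}) :=
      ae_all_iff.mpr fun q => hlevel _ ENNReal.coe_ne_top
    filter_upwards [h1] with y hy
    show g (S y) = g y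
    by_contra hne
    rcases lt_or_gt_of_ne hne with hlt | hlt
    · obtain ⟨q, _, h1q, h2q⟩ := ENNReal.lt_iff_exists_rat_btwn.1 hlt
      have hyB : y ∈ {z | ((Real.toNNReal q : ℝ≥0∞)) < g z} := h2q
      have hyB' : y ∈ S ⁻¹' {z | ((Real.toNNReal q : ℝ≥0∞)) < g z} := cast (hy q).symm hyB
      exact absurd (show ((Real.toNNReal q : ℝ≥0∞)) < g (S y) from hyB')
        (not_lt.mpr h1q.le)
    · obtain ⟨q, _, h1q, h2q⟩ := ENNReal.lt_iff_exists_rat_btwn.1 hlt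
      have hyB : y ∈ S ⁻¹' {z | ((Real.toNNReal q : ℝ≥0∞)) < g z} := h2q
      have hyB' : y ∈ {z | ((Real.toNNReal q : ℝ≥0∞)) < g z} := cast (hy q) hyB
      exact absurd (show ((Real.toNNReal q : ℝ≥0∞)) < g y from hyB')
        (not_lt.mpr h1q.le)
  obtain ⟨c, hc⟩ := herg.ae_eq_const_of_ae_eq_comp₀ hg.nullMeasurable hgS
  have hlam : lam = c • ν := by
    rw [← hwd, withDensity_congr_ae hc]
    exact withDensity_const c
  have hcuniv : lam Set.univ = c := by
    rw [hlam]; simp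
  rw [hcuniv, hlam]

/-- If `X` is a random variable and `(Y_i)_{i ∈ ℕ}` is a sequence of random variables such that
the pair sequence `(X, Y_i)_{i ∈ ℕ}` is stationary (the joint law of `(X, (Y_i))` is invariant
under shifting the sequence coordinate) and `(Y_i)_{i ∈ ℕ}` is ergodic (the left shift is a
measure-preserving ergodic transformation for its law), then `X` and `Y_1` are independent. -/
theorem stationary_ergodic_independent
    {Ω E F : Type*} [MeasurableSpace Ω] [MeasurableSpace E] [MeasurableSpace F]
    (P : Measure Ω) [IsProbabilityMeasure P]
    (X : Ω → E) (Y : ℕ → Ω → F)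
    (hX : Measurable X) (hY : ∀ i, Measurable (Y i))
    (hstat :
      Measure.map (fun p : E × (ℕ → F) => (p.1, fun n => p.2 (n + 1)))
          (Measure.map (fun ω => (X ω, fun i => Y i ω)) P)
        = Measure.map (fun ω => (X ω, fun i => Y i ω)) P)
    (herg : Ergodic (fun y : ℕ → F => fun n => y (n + 1))
        (Measure.map (fun ω => fun i => Y i ω) P)) :
    Measure.map (fun ω => (X ω, Y 1 ω)) P
      = (Measure.map X P).prod (Measure.map (Y 1) P) := by
  have hYseq : Measurable (fun ω => fun i => Y i ω) :=
    measurable_pi_lambda _ fun i => hY i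
  have hpair : Measurable (fun ω => (X ω, fun i => Y i ω)) := hX.prodMk hYseq
  set μ : Measure (E × (ℕ → F)) := Measure.map (fun ω => (X ω, fun i => Y i ω)) P with hμdef
  set ν : Measure (ℕ → F) := Measure.map (fun ω => fun i => Y i ω) P with hνdef
  have hS : Measurable (fun y : ℕ → F => fun n => y (n + 1)) :=
    measurable_pi_lambda _ fun n => measurable_pi_apply _
  have hT : Measurable (fun p : E × (ℕ → F) => (p.1, fun n => p.2 (n + 1))) :=
    measurable_fst.prodMk (hS.comp measurable_snd)
  haveI : IsProbabilityMeasure μ := Measure.isProbabilityMeasure_map hpair.aemeasurable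
  haveI : IsProbabilityMeasure ν := Measure.isProbabilityMeasure_map hYseq.aemeasurable
  have hsnd : μ.map Prod.snd = ν := by
    rw [hμdef, Measure.map_map measurable_snd hpair]; rfl
  haveI : IsProbabilityMeasure (Measure.map X P) := Measure.isProbabilityMeasure_map hX.aemeasurable
  haveI : IsProbabilityMeasure (Measure.map (Y 1) P) :=
    Measure.isProbabilityMeasure_map (hY 1).aemeasurable
  symm
  apply Measure.prod_eq
  intro A B hA hB
  have e1 : Measurable (fun y : ℕ → F => y 1) := measurable_pi_apply 1
  set lam : Measure (ℕ → F) := (μ.restrict (A ×ˢ Set.univ)).map Prod.snd with hlamdef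
  haveI : IsFiniteMeasure lam := by
    constructor
    rw [hlamdef, Measure.map_apply measurable_snd MeasurableSet.univ]
    exact measure_lt_top _ _
  have hlam_apply : ∀ C : Set (ℕ → F), MeasurableSet C → lam C = μ (A ×ˢ C) := by
    intro C hC
    rw [hlamdef, Measure.map_apply measurable_snd hC,
      Measure.restrict_apply (measurable_snd hC)]
    congr 1
    ext ⟨a, b⟩
    simp [and_comm]
  have hac : lam ≪ ν := by
    rw [← hsnd]
    exact Measure.absolutelyContinuous_of_le
      (Measure.map_mono Measure.restrict_le_self measurable_snd)
  have hpre : (fun p : E × (ℕ → F) => (p.1, fun n => p.2 (n + 1))) ⁻¹' (A ×ˢ Set.univ)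
      = A ×ˢ Set.univ := by
    ext ⟨a, b⟩; simp
  have hinvρ :
      (μ.restrict (A ×ˢ Set.univ)).map
          (fun p : E × (ℕ → F) => (p.1, fun n => p.2 (n + 1)))
        = μ.restrict (A ×ˢ Set.univ) := by
    calc (μ.restrict (A ×ˢ Set.univ)).map
          (fun p : E × (ℕ → F) => (p.1, fun n => p.2 (n + 1)))
        = (μ.restrict ((fun p : E × (ℕ → F) => (p.1, fun n => p.2 (n + 1))) ⁻¹'
            (A ×ˢ Set.univ))).map
            (fun p : E × (ℕ → F) => (p.1, fun n => p.2 (n + 1))) := by rw [hpre]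
      _ = (μ.map (fun p : E × (ℕ → F) => (p.1, fun n => p.2 (n + 1)))).restrict
            (A ×ˢ Set.univ) :=
          (Measure.restrict_map hT (hA.prod MeasurableSet.univ)).symm
      _ = μ.restrict (A ×ˢ Set.univ) := by rw [hstat]
  have hinv : lam.map (fun y : ℕ → F => fun n => y (n + 1)) = lam := by
    rw [hlamdef, Measure.map_map hS measurable_snd,
      show ((fun y : ℕ → F => fun n => y (n + 1)) ∘ Prod.snd : E × (ℕ → F) → ℕ → F)
        = Prod.snd ∘ (fun p : E × (ℕ → F) => (p.1, fun n => p.2 (n + 1))) from rfl,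
      ← Measure.map_map measurable_snd hT, hinvρ]
  have hkey := aux_ergodic_eq_smul herg hinv hac
  have happ : lam ((fun y : ℕ → F => y 1) ⁻¹' B)
      = lam Set.univ * ν ((fun y : ℕ → F => y 1) ⁻¹' B) := by
    conv_lhs => rw [hkey]
    simp [Measure.smul_apply]
  calc Measure.map (fun ω => (X ω, Y 1 ω)) P (A ×ˢ B)
      = P (X ⁻¹' A ∩ Y 1 ⁻¹' B) := by
        rw [Measure.map_apply (hX.prodMk (hY 1)) (hA.prod hB), Set.mk_preimage_prod]
    _ = μ (A ×ˢ ((fun y : ℕ → F => y 1) ⁻¹' B)) := by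
        rw [hμdef, Measure.map_apply hpair (hA.prod (e1 hB)), Set.mk_preimage_prod]
        rfl
    _ = lam ((fun y : ℕ → F => y 1) ⁻¹' B) := (hlam_apply _ (e1 hB)).symm
    _ = lam Set.univ * ν ((fun y : ℕ → F => y 1) ⁻¹' B) := happ
    _ = Measure.map X P A * Measure.map (Y 1) P B := by
        rw [hlam_apply _ MeasurableSet.univ]
        congr 1
        · rw [hμdef, Measure.map_apply hpair (hA.prod MeasurableSet.univ),
            Measure.map_apply hX hA]
          congr 1
          ext ω
          simp
        · rw [hνdef, Measure.map_apply hYseq (e1 hB), Measure.map_apply (hY 1) hB]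
          rfl
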